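/- Local confluence of R_B: for all DeMorgan formulas t, u, u', if t →_{R_B} u and t →_{R_B} u' (single steps), then there exists a formula v with u →*_{R_B} v and u' →*_{R_B} v. -/

import Mathlib

/-- DeMorgan formulas: variables, constants 0 and 1, negation, conjunction, disjunction. -/
inductive Fm : Type
  | var : ℕ → Fm
  | zero : Fm
  | one : Fm
  | not : Fm → Fm
  | and : Fm → Fm → Fm
  | or : Fm → Fm → Fm
deriving DecidableEq

/-- Evaluation of a DeMorgan formula under an assignment. -/
def Fm.eval (σ : ℕ → Bool) : Fm → Bool
  | .var n => σ n
  | .zero => false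
  | .one => true
  | .not t => !(t.eval σ)
  | .and t u => t.eval σ && u.eval σ
  | .or t u => t.eval σ || u.eval σ

/-- The root rewrite rules of the term rewriting system `R_B`
(the rule variable `g` stands for an arbitrary formula). -/
inductive RB : Fm → Fm → Prop
  | zero_def : RB .zero (.not .one)
  | not_not (g : Fm) : RB (.not (.not g)) g
  | and_idem (g : Fm) : RB (.and g g) g
  | or_idem (g : Fm) : RB (.or g g) g
  | and_notone_r (g : Fm) : RB (.and g (.not .one)) (.not .one)
  | and_notone_l (g : Fm) : RB (.and (.not .one) g) (.not .one)
  | or_one_r (g : Fm) : RB (.or g .one) .one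
  | or_one_l (g : Fm) : RB (.or .one g) .one
  | and_one_r (g : Fm) : RB (.and g .one) g
  | and_one_l (g : Fm) : RB (.and .one g) g
  | or_notone_r (g : Fm) : RB (.or g (.not .one)) g
  | or_notone_l (g : Fm) : RB (.or (.not .one) g) g
  | and_not_self_r (g : Fm) : RB (.and g (.not g)) (.not .one)
  | and_not_self_l (g : Fm) : RB (.and (.not g) g) (.not .one)
  | or_not_self_r (g : Fm) : RB (.or g (.not g)) .one
  | or_not_self_l (g : Fm) : RB (.or (.not g) g) .one

/-- One rewrite step of `R_B`: a rule applied to a single subterm. -/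
inductive Step : Fm → Fm → Prop
  | rule {t u : Fm} : RB t u → Step t u
  | not {t u : Fm} : Step t u → Step (.not t) (.not u)
  | and_left {t t' u : Fm} : Step t t' → Step (.and t u) (.and t' u)
  | and_right {t u u' : Fm} : Step u u' → Step (.and t u) (.and t u')
  | or_left {t t' u : Fm} : Step t t' → Step (.or t u) (.or t' u)
  | or_right {t u u' : Fm} : Step u u' → Step (.or t u) (.or t u')

/-- The reflexive transitive closure of one-step rewriting. -/
def Steps : Fm → Fm → Prop := Relation.ReflTransGen Step

/-- A formula is in normal form when no rule applies to any of its subterms. -/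
def NormalForm (t : Fm) : Prop := ¬ ∃ u, Step t u

/-- smart negation -/
def mkNot : Fm → Fm
  | .not g => g
  | t => .not t

def mkAnd (a b : Fm) : Fm :=
  if a = .not .one then .not .one
  else if b = .not .one then .not .one
  else if a = .one then b
  else if b = .one then a
  else if a = b then a
  else if a = .not b then .not .one
  else if b = .not a then .not .one
  else .and a b

def mkOr (a b : Fm) : Fm :=
  if a = .one then .one
  else if b = .one then .one
  else if a = .not .one then b
  else if b = .not .one then a
  else if a = b then a
  else if a = .not b then .one
  else if b = .not a then .one
  else .or a b

def nf : Fm → Fm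
  | .var n => .var n
  | .zero => .not .one
  | .one => .one
  | .not t => mkNot (nf t)
  | .and t u => mkAnd (nf t) (nf u)
  | .or t u => mkOr (nf t) (nf u)

lemma ne_not_self : ∀ t : Fm, t ≠ .not t := by
  intro t; induction t <;> simp_all

lemma not_ne_self : ∀ t : Fm, Fm.not t ≠ t := fun t h => ne_not_self t h.symm

lemma ne_nn_self : ∀ t : Fm, t ≠ .not (.not t) := by
  intro t; induction t <;> simp_all

lemma nn_ne_self : ∀ t : Fm, Fm.not (.not t) ≠ t := fun t h => ne_nn_self t h.symm

@[simp] lemma eq_not_self_iff (t : Fm) : (t = .not t) ↔ False := by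
  simp [ne_not_self t]
@[simp] lemma not_self_eq_iff (t : Fm) : (Fm.not t = t) ↔ False := by
  simp [not_ne_self t]
@[simp] lemma eq_nn_self_iff (t : Fm) : (t = .not (.not t)) ↔ False := by
  simp [ne_nn_self t]
@[simp] lemma nn_self_eq_iff (t : Fm) : (Fm.not (.not t) = t) ↔ False := by
  simp [(ne_nn_self t).symm]

def NN : Fm → Prop
  | .not (.not _) => False
  | _ => True

lemma NN_mkNot {a : Fm} (h : NN a) : NN (mkNot a) := by
  cases a <;> simp_all [mkNot, NN]
  case not b => cases b <;> simp_all [NN]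

lemma NN_mkAnd {a b : Fm} (ha : NN a) (hb : NN b) : NN (mkAnd a b) := by
  unfold mkAnd; split_ifs <;> subst_vars <;> first | rfl | (exfalso; solve_by_elim [ne_not_self, not_ne_self, ne_nn_self, nn_ne_self]) | simp_all [NN]

lemma NN_mkOr {a b : Fm} (ha : NN a) (hb : NN b) : NN (mkOr a b) := by
  unfold mkOr; split_ifs <;> subst_vars <;> first | rfl | (exfalso; solve_by_elim [ne_not_self, not_ne_self, ne_nn_self, nn_ne_self]) | simp_all [NN]

lemma NN_nf : ∀ t, NN (nf t) := by
  intro t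
  induction t with
  | var n => trivial
  | zero => trivial
  | one => trivial
  | not t ih => simp only [nf]; exact NN_mkNot ih
  | and t u iht ihu => simp only [nf]; exact NN_mkAnd iht ihu
  | or t u iht ihu => simp only [nf]; exact NN_mkOr iht ihu

lemma mkNot_mkNot {a : Fm} (h : NN a) : mkNot (mkNot a) = a := by
  cases a <;> simp [mkNot]
  case not b => cases b <;> simp_all [mkNot, NN]

lemma mkNot_one : mkNot .one = .not .one := rfl

lemma mkAnd_self (a : Fm) : mkAnd a a = a := by
  unfold mkAnd; split_ifs <;> subst_vars <;> first | rfl | (exfalso; solve_by_elim [ne_not_self, not_ne_self, ne_nn_self, nn_ne_self]) | simp_all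

lemma mkOr_self (a : Fm) : mkOr a a = a := by
  unfold mkOr; split_ifs <;> subst_vars <;> first | rfl | (exfalso; solve_by_elim [ne_not_self, not_ne_self, ne_nn_self, nn_ne_self]) | simp_all

lemma mkAnd_notone_r (a : Fm) : mkAnd a (.not .one) = .not .one := by
  unfold mkAnd; split_ifs <;> subst_vars <;> first | rfl | (exfalso; solve_by_elim [ne_not_self, not_ne_self, ne_nn_self, nn_ne_self]) | simp_all

lemma mkAnd_notone_l (a : Fm) : mkAnd (.not .one) a = .not .one := by
  unfold mkAnd; split_ifs <;> subst_vars <;> first | rfl | (exfalso; solve_by_elim [ne_not_self, not_ne_self, ne_nn_self, nn_ne_self]) | simp_all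

lemma mkOr_one_r (a : Fm) : mkOr a .one = .one := by
  unfold mkOr; split_ifs <;> subst_vars <;> first | rfl | (exfalso; solve_by_elim [ne_not_self, not_ne_self, ne_nn_self, nn_ne_self]) | simp_all

lemma mkOr_one_l (a : Fm) : mkOr .one a = .one := by
  unfold mkOr; split_ifs <;> subst_vars <;> first | rfl | (exfalso; solve_by_elim [ne_not_self, not_ne_self, ne_nn_self, nn_ne_self]) | simp_all

lemma mkAnd_one_r (a : Fm) : mkAnd a .one = a := by
  unfold mkAnd; split_ifs <;> subst_vars <;> first | rfl | (exfalso; solve_by_elim [ne_not_self, not_ne_self, ne_nn_self, nn_ne_self]) | simp_all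

lemma mkAnd_one_l (a : Fm) : mkAnd .one a = a := by
  unfold mkAnd; split_ifs <;> subst_vars <;> first | rfl | (exfalso; solve_by_elim [ne_not_self, not_ne_self, ne_nn_self, nn_ne_self]) | simp_all

lemma mkOr_notone_r (a : Fm) : mkOr a (.not .one) = a := by
  unfold mkOr; split_ifs <;> subst_vars <;> first | rfl | (exfalso; solve_by_elim [ne_not_self, not_ne_self, ne_nn_self, nn_ne_self]) | simp_all

lemma mkOr_notone_l (a : Fm) : mkOr (.not .one) a = a := by
  unfold mkOr; split_ifs <;> subst_vars <;> first | rfl | (exfalso; solve_by_elim [ne_not_self, not_ne_self, ne_nn_self, nn_ne_self]) | simp_all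

lemma mkAnd_not_self_r (a : Fm) (h : NN a) : mkAnd a (mkNot a) = .not .one := by
  match a with
  | .not b =>
      match b with
      | .not c => simp [NN] at h
      | .var n => show mkAnd (.not (Fm.var n)) (Fm.var n) = _; unfold mkAnd; split_ifs <;> subst_vars <;> first | rfl | (exfalso; solve_by_elim [ne_not_self, not_ne_self, ne_nn_self, nn_ne_self]) | simp_all
      | .zero => show mkAnd (.not Fm.zero) Fm.zero = _; unfold mkAnd; split_ifs <;> subst_vars <;> first | rfl | (exfalso; solve_by_elim [ne_not_self, not_ne_self, ne_nn_self, nn_ne_self]) | simp_all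
      | .one => show mkAnd (.not Fm.one) Fm.one = _; unfold mkAnd; split_ifs <;> subst_vars <;> first | rfl | (exfalso; solve_by_elim [ne_not_self, not_ne_self, ne_nn_self, nn_ne_self]) | simp_all
      | .and x y => show mkAnd (.not (Fm.and x y)) (Fm.and x y) = _; unfold mkAnd; split_ifs <;> subst_vars <;> first | rfl | (exfalso; solve_by_elim [ne_not_self, not_ne_self, ne_nn_self, nn_ne_self]) | simp_all
      | .or x y => show mkAnd (.not (Fm.or x y)) (Fm.or x y) = _; unfold mkAnd; split_ifs <;> subst_vars <;> first | rfl | (exfalso; solve_by_elim [ne_not_self, not_ne_self, ne_nn_self, nn_ne_self]) | simp_all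
  | .var n => show mkAnd (Fm.var n) (.not (Fm.var n)) = _; unfold mkAnd; split_ifs <;> subst_vars <;> first | rfl | (exfalso; solve_by_elim [ne_not_self, not_ne_self, ne_nn_self, nn_ne_self]) | simp_all
  | .zero => show mkAnd Fm.zero (.not Fm.zero) = _; unfold mkAnd; split_ifs <;> subst_vars <;> first | rfl | (exfalso; solve_by_elim [ne_not_self, not_ne_self, ne_nn_self, nn_ne_self]) | simp_all
  | .one => show mkAnd Fm.one (.not Fm.one) = _; unfold mkAnd; split_ifs <;> subst_vars <;> first | rfl | (exfalso; solve_by_elim [ne_not_self, not_ne_self, ne_nn_self, nn_ne_self]) | simp_all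
  | .and x y => show mkAnd (Fm.and x y) (.not (Fm.and x y)) = _; unfold mkAnd; split_ifs <;> subst_vars <;> first | rfl | (exfalso; solve_by_elim [ne_not_self, not_ne_self, ne_nn_self, nn_ne_self]) | simp_all
  | .or x y => show mkAnd (Fm.or x y) (.not (Fm.or x y)) = _; unfold mkAnd; split_ifs <;> subst_vars <;> first | rfl | (exfalso; solve_by_elim [ne_not_self, not_ne_self, ne_nn_self, nn_ne_self]) | simp_all
lemma mkAnd_not_self_l (a : Fm) (h : NN a) : mkAnd (mkNot a) a = .not .one := by
  match a with
  | .not b =>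
      match b with
      | .not c => simp [NN] at h
      | .var n => show mkAnd (Fm.var n) (.not (Fm.var n)) = _; unfold mkAnd; split_ifs <;> subst_vars <;> first | rfl | (exfalso; solve_by_elim [ne_not_self, not_ne_self, ne_nn_self, nn_ne_self]) | simp_all
      | .zero => show mkAnd Fm.zero (.not Fm.zero) = _; unfold mkAnd; split_ifs <;> subst_vars <;> first | rfl | (exfalso; solve_by_elim [ne_not_self, not_ne_self, ne_nn_self, nn_ne_self]) | simp_all
      | .one => show mkAnd Fm.one (.not Fm.one) = _; unfold mkAnd; split_ifs <;> subst_vars <;> first | rfl | (exfalso; solve_by_elim [ne_not_self, not_ne_self, ne_nn_self, nn_ne_self]) | simp_all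
      | .and x y => show mkAnd (Fm.and x y) (.not (Fm.and x y)) = _; unfold mkAnd; split_ifs <;> subst_vars <;> first | rfl | (exfalso; solve_by_elim [ne_not_self, not_ne_self, ne_nn_self, nn_ne_self]) | simp_all
      | .or x y => show mkAnd (Fm.or x y) (.not (Fm.or x y)) = _; unfold mkAnd; split_ifs <;> subst_vars <;> first | rfl | (exfalso; solve_by_elim [ne_not_self, not_ne_self, ne_nn_self, nn_ne_self]) | simp_all
  | .var n => show mkAnd (.not (Fm.var n)) (Fm.var n) = _; unfold mkAnd; split_ifs <;> subst_vars <;> first | rfl | (exfalso; solve_by_elim [ne_not_self, not_ne_self, ne_nn_self, nn_ne_self]) | simp_all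
  | .zero => show mkAnd (.not Fm.zero) Fm.zero = _; unfold mkAnd; split_ifs <;> subst_vars <;> first | rfl | (exfalso; solve_by_elim [ne_not_self, not_ne_self, ne_nn_self, nn_ne_self]) | simp_all
  | .one => show mkAnd (.not Fm.one) Fm.one = _; unfold mkAnd; split_ifs <;> subst_vars <;> first | rfl | (exfalso; solve_by_elim [ne_not_self, not_ne_self, ne_nn_self, nn_ne_self]) | simp_all
  | .and x y => show mkAnd (.not (Fm.and x y)) (Fm.and x y) = _; unfold mkAnd; split_ifs <;> subst_vars <;> first | rfl | (exfalso; solve_by_elim [ne_not_self, not_ne_self, ne_nn_self, nn_ne_self]) | simp_all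
  | .or x y => show mkAnd (.not (Fm.or x y)) (Fm.or x y) = _; unfold mkAnd; split_ifs <;> subst_vars <;> first | rfl | (exfalso; solve_by_elim [ne_not_self, not_ne_self, ne_nn_self, nn_ne_self]) | simp_all
lemma mkOr_not_self_r (a : Fm) (h : NN a) : mkOr a (mkNot a) = .one := by
  match a with
  | .not b =>
      match b with
      | .not c => simp [NN] at h
      | .var n => show mkOr (.not (Fm.var n)) (Fm.var n) = _; unfold mkOr; split_ifs <;> subst_vars <;> first | rfl | (exfalso; solve_by_elim [ne_not_self, not_ne_self, ne_nn_self, nn_ne_self]) | simp_all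
      | .zero => show mkOr (.not Fm.zero) Fm.zero = _; unfold mkOr; split_ifs <;> subst_vars <;> first | rfl | (exfalso; solve_by_elim [ne_not_self, not_ne_self, ne_nn_self, nn_ne_self]) | simp_all
      | .one => show mkOr (.not Fm.one) Fm.one = _; unfold mkOr; split_ifs <;> subst_vars <;> first | rfl | (exfalso; solve_by_elim [ne_not_self, not_ne_self, ne_nn_self, nn_ne_self]) | simp_all
      | .and x y => show mkOr (.not (Fm.and x y)) (Fm.and x y) = _; unfold mkOr; split_ifs <;> subst_vars <;> first | rfl | (exfalso; solve_by_elim [ne_not_self, not_ne_self, ne_nn_self, nn_ne_self]) | simp_all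
      | .or x y => show mkOr (.not (Fm.or x y)) (Fm.or x y) = _; unfold mkOr; split_ifs <;> subst_vars <;> first | rfl | (exfalso; solve_by_elim [ne_not_self, not_ne_self, ne_nn_self, nn_ne_self]) | simp_all
  | .var n => show mkOr (Fm.var n) (.not (Fm.var n)) = _; unfold mkOr; split_ifs <;> subst_vars <;> first | rfl | (exfalso; solve_by_elim [ne_not_self, not_ne_self, ne_nn_self, nn_ne_self]) | simp_all
  | .zero => show mkOr Fm.zero (.not Fm.zero) = _; unfold mkOr; split_ifs <;> subst_vars <;> first | rfl | (exfalso; solve_by_elim [ne_not_self, not_ne_self, ne_nn_self, nn_ne_self]) | simp_all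
  | .one => show mkOr Fm.one (.not Fm.one) = _; unfold mkOr; split_ifs <;> subst_vars <;> first | rfl | (exfalso; solve_by_elim [ne_not_self, not_ne_self, ne_nn_self, nn_ne_self]) | simp_all
  | .and x y => show mkOr (Fm.and x y) (.not (Fm.and x y)) = _; unfold mkOr; split_ifs <;> subst_vars <;> first | rfl | (exfalso; solve_by_elim [ne_not_self, not_ne_self, ne_nn_self, nn_ne_self]) | simp_all
  | .or x y => show mkOr (Fm.or x y) (.not (Fm.or x y)) = _; unfold mkOr; split_ifs <;> subst_vars <;> first | rfl | (exfalso; solve_by_elim [ne_not_self, not_ne_self, ne_nn_self, nn_ne_self]) | simp_all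
lemma mkOr_not_self_l (a : Fm) (h : NN a) : mkOr (mkNot a) a = .one := by
  match a with
  | .not b =>
      match b with
      | .not c => simp [NN] at h
      | .var n => show mkOr (Fm.var n) (.not (Fm.var n)) = _; unfold mkOr; split_ifs <;> subst_vars <;> first | rfl | (exfalso; solve_by_elim [ne_not_self, not_ne_self, ne_nn_self, nn_ne_self]) | simp_all
      | .zero => show mkOr Fm.zero (.not Fm.zero) = _; unfold mkOr; split_ifs <;> subst_vars <;> first | rfl | (exfalso; solve_by_elim [ne_not_self, not_ne_self, ne_nn_self, nn_ne_self]) | simp_all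
      | .one => show mkOr Fm.one (.not Fm.one) = _; unfold mkOr; split_ifs <;> subst_vars <;> first | rfl | (exfalso; solve_by_elim [ne_not_self, not_ne_self, ne_nn_self, nn_ne_self]) | simp_all
      | .and x y => show mkOr (Fm.and x y) (.not (Fm.and x y)) = _; unfold mkOr; split_ifs <;> subst_vars <;> first | rfl | (exfalso; solve_by_elim [ne_not_self, not_ne_self, ne_nn_self, nn_ne_self]) | simp_all
      | .or x y => show mkOr (Fm.or x y) (.not (Fm.or x y)) = _; unfold mkOr; split_ifs <;> subst_vars <;> first | rfl | (exfalso; solve_by_elim [ne_not_self, not_ne_self, ne_nn_self, nn_ne_self]) | simp_all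
  | .var n => show mkOr (.not (Fm.var n)) (Fm.var n) = _; unfold mkOr; split_ifs <;> subst_vars <;> first | rfl | (exfalso; solve_by_elim [ne_not_self, not_ne_self, ne_nn_self, nn_ne_self]) | simp_all
  | .zero => show mkOr (.not Fm.zero) Fm.zero = _; unfold mkOr; split_ifs <;> subst_vars <;> first | rfl | (exfalso; solve_by_elim [ne_not_self, not_ne_self, ne_nn_self, nn_ne_self]) | simp_all
  | .one => show mkOr (.not Fm.one) Fm.one = _; unfold mkOr; split_ifs <;> subst_vars <;> first | rfl | (exfalso; solve_by_elim [ne_not_self, not_ne_self, ne_nn_self, nn_ne_self]) | simp_all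
  | .and x y => show mkOr (.not (Fm.and x y)) (Fm.and x y) = _; unfold mkOr; split_ifs <;> subst_vars <;> first | rfl | (exfalso; solve_by_elim [ne_not_self, not_ne_self, ne_nn_self, nn_ne_self]) | simp_all
  | .or x y => show mkOr (.not (Fm.or x y)) (Fm.or x y) = _; unfold mkOr; split_ifs <;> subst_vars <;> first | rfl | (exfalso; solve_by_elim [ne_not_self, not_ne_self, ne_nn_self, nn_ne_self]) | simp_all
lemma nf_rule {t u : Fm} (h : RB t u) : nf t = nf u := by
  cases h with
  | zero_def => simp only [nf, mkNot_one]
  | not_not => simp only [nf]; exact mkNot_mkNot (NN_nf u)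
  | and_idem => simp only [nf]; exact mkAnd_self _
  | or_idem => simp only [nf]; exact mkOr_self _
  | and_notone_r g => simp only [nf, mkNot_one]; exact mkAnd_notone_r _
  | and_notone_l g => simp only [nf, mkNot_one]; exact mkAnd_notone_l _
  | or_one_r g => simp only [nf]; exact mkOr_one_r _
  | or_one_l g => simp only [nf]; exact mkOr_one_l _
  | and_one_r => simp only [nf]; exact mkAnd_one_r _
  | and_one_l => simp only [nf]; exact mkAnd_one_l _
  | or_notone_r => simp only [nf, mkNot_one]; exact mkOr_notone_r _
  | or_notone_l => simp only [nf, mkNot_one]; exact mkOr_notone_l _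
  | and_not_self_r g => simp only [nf, mkNot_one]; exact mkAnd_not_self_r _ (NN_nf _)
  | and_not_self_l g => simp only [nf, mkNot_one]; exact mkAnd_not_self_l _ (NN_nf _)
  | or_not_self_r g => simp only [nf]; exact mkOr_not_self_r _ (NN_nf _)
  | or_not_self_l g => simp only [nf]; exact mkOr_not_self_l _ (NN_nf _)
lemma nf_step {t u : Fm} (h : Step t u) : nf t = nf u := by
  induction h with
  | rule h => exact nf_rule h
  | not _ ih => simp only [nf, ih]
  | and_left _ ih => simp only [nf, ih]
  | and_right _ ih => simp only [nf, ih]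
  | or_left _ ih => simp only [nf, ih]
  | or_right _ ih => simp only [nf, ih]

lemma steps_not {t u : Fm} (h : Steps t u) : Steps (.not t) (.not u) :=
  Relation.ReflTransGen.lift Fm.not (fun _ _ => Step.not) _ _ h

lemma steps_and {t t' u u' : Fm} (h : Steps t t') (h' : Steps u u') :
    Steps (.and t u) (.and t' u') := by
  refine Relation.ReflTransGen.trans
    (Relation.ReflTransGen.lift (fun x => Fm.and x u) (fun _ _ => Step.and_left) _ _ h) ?_
  exact Relation.ReflTransGen.lift (fun x => Fm.and t' x) (fun _ _ => Step.and_right) _ _ h'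

lemma steps_or {t t' u u' : Fm} (h : Steps t t') (h' : Steps u u') :
    Steps (.or t u) (.or t' u') := by
  refine Relation.ReflTransGen.trans
    (Relation.ReflTransGen.lift (fun x => Fm.or x u) (fun _ _ => Step.or_left) _ _ h) ?_
  exact Relation.ReflTransGen.lift (fun x => Fm.or t' x) (fun _ _ => Step.or_right) _ _ h'

lemma steps_mkNot (a : Fm) : Steps (.not a) (mkNot a) := by
  cases a <;> simp [mkNot]
  case not b => exact Relation.ReflTransGen.single (Step.rule (RB.not_not b))
  all_goals exact Relation.ReflTransGen.refl

lemma steps_mkAnd (a b : Fm) : Steps (.and a b) (mkAnd a b) := by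
  unfold mkAnd; split_ifs <;> subst_vars <;>
    first
    | exact Relation.ReflTransGen.refl
    | exact Relation.ReflTransGen.single (Step.rule (by constructor))

lemma steps_mkOr (a b : Fm) : Steps (.or a b) (mkOr a b) := by
  unfold mkOr; split_ifs <;> subst_vars <;>
    first
    | exact Relation.ReflTransGen.refl
    | exact Relation.ReflTransGen.single (Step.rule (by constructor))

lemma steps_nf : ∀ t, Steps t (nf t) := by
  intro t
  induction t with
  | var n => exact Relation.ReflTransGen.refl
  | zero => exact Relation.ReflTransGen.single (Step.rule RB.zero_def)
  | one => exact Relation.ReflTransGen.refl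
  | not t ih => exact Relation.ReflTransGen.trans (steps_not ih) (steps_mkNot _)
  | and t u iht ihu =>
      exact Relation.ReflTransGen.trans (steps_and iht ihu) (steps_mkAnd _ _)
  | or t u iht ihu =>
      exact Relation.ReflTransGen.trans (steps_or iht ihu) (steps_mkOr _ _)

/-- Local confluence of `R_B`: any two single steps from a common formula
can be joined by finitely many further steps. -/
theorem RB_locally_confluent :
    ∀ t u u' : Fm, Step t u → Step t u' → ∃ v : Fm, Steps u v ∧ Steps u' v := by
  intro t u u' h h'
  exact ⟨nf t, nf_step h ▸ steps_nf u, nf_step h' ▸ steps_nf u'⟩
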